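/- For a convex function f : [a,b] → ℝ with a < b, the midpoint estimate is stronger than the trapezoid estimate in the Hermite–Hadamard inequality: (1/(b-a))∫_a^b f(x) dx − f((a+b)/2) ≤ (f(a)+f(b))/2 − (1/(b-a))∫_a^b f(x) dx. (Bullen's inequality.) -/

import Mathlib

open MeasureTheory

lemma trapezoid_bound (f : ℝ → ℝ) (a b : ℝ) (hab : a < b)
    (hconv : ConvexOn ℝ (Set.Icc a b) f)
    (hint : IntegrableOn f (Set.Icc a b)) :
    ∫ x in a..b, f x ≤ (b - a) * (f a + f b) / 2 := by
  have hba : (0:ℝ) < b - a := by linarith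
  have hle : a ≤ b := hab.le
  have h1 : ∀ x ∈ Set.Icc a b, f x ≤ ((b - x) * f a + (x - a) * f b) / (b - a) := by
    intro x hx
    obtain ⟨hxa, hxb⟩ := hx
    have h := hconv.2 (Set.left_mem_Icc.2 hle) (Set.right_mem_Icc.2 hle)
      (show (0:ℝ) ≤ (b - x) / (b - a) from div_nonneg (by linarith) (by linarith))
      (show (0:ℝ) ≤ (x - a) / (b - a) from div_nonneg (by linarith) (by linarith))
      (show (b - x) / (b - a) + (x - a) / (b - a) = 1 by field_simp; ring)
    have hx' : ((b - x) / (b - a)) • a + ((x - a) / (b - a)) • b = x := by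
      simp only [smul_eq_mul]; field_simp; ring
    rw [hx'] at h
    simp only [smul_eq_mul] at h
    calc f x ≤ (b - x) / (b - a) * f a + (x - a) / (b - a) * f b := h
      _ = ((b - x) * f a + (x - a) * f b) / (b - a) := by ring
  have hInt : IntervalIntegrable f volume a b := by
    rw [intervalIntegrable_iff_integrableOn_Icc_of_le hle]; exact hint
  have hg : IntervalIntegrable (fun x => ((b - x) * f a + (x - a) * f b) / (b - a))
      volume a b := by
    apply Continuous.intervalIntegrable; fun_prop
  have := intervalIntegral.integral_mono_on hle hInt hg (fun x hx => h1 x hx)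
  refine this.trans_eq ?_
  have : ∫ x in a..b, ((b - x) * f a + (x - a) * f b) / (b - a)
      = (∫ x in a..b, ((b - x) * f a + (x - a) * f b)) / (b - a) :=
    intervalIntegral.integral_div _ _
  rw [this]
  rw [intervalIntegral.integral_add (by apply Continuous.intervalIntegrable; fun_prop)
    (by apply Continuous.intervalIntegrable; fun_prop)]
  rw [intervalIntegral.integral_mul_const, intervalIntegral.integral_mul_const]
  have e1 : ∫ x in a..b, (b - x) = (b - a)^2 / 2 := by
    rw [intervalIntegral.integral_sub (by apply Continuous.intervalIntegrable; fun_prop)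
      (by apply Continuous.intervalIntegrable; fun_prop)]
    simp [integral_id, intervalIntegral.integral_const]
    ring
  have e2 : ∫ x in a..b, (x - a) = (b - a)^2 / 2 := by
    rw [intervalIntegral.integral_sub (by apply Continuous.intervalIntegrable; fun_prop)
      (by apply Continuous.intervalIntegrable; fun_prop)]
    simp [integral_id, intervalIntegral.integral_const]
    ring
  rw [e1, e2]
  field_simp

theorem bullen_inequality (f : ℝ → ℝ) (a b : ℝ) (hab : a < b)
    (hconv : ConvexOn ℝ (Set.Icc a b) f)
    (hint : IntegrableOn f (Set.Icc a b)) :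
    (1 / (b - a)) * ∫ x in a..b, f x - f ((a + b) / 2) ≤
      (f a + f b) / 2 - (1 / (b - a)) * ∫ x in a..b, f x := by
  set m := (a + b) / 2 with hm
  have ham : a < m := by rw [hm]; linarith
  have hmb : m < b := by rw [hm]; linarith
  have hba : (0:ℝ) < b - a := by linarith
  have hs1 : Set.Icc a m ⊆ Set.Icc a b := Set.Icc_subset_Icc le_rfl hmb.le
  have hs2 : Set.Icc m b ⊆ Set.Icc a b := Set.Icc_subset_Icc ham.le le_rfl
  have t1 := trapezoid_bound f a m ham (hconv.subset hs1 (convex_Icc a m))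
    (hint.mono_set hs1)
  have t2 := trapezoid_bound f m b hmb (hconv.subset hs2 (convex_Icc m b))
    (hint.mono_set hs2)
  have hsplit : (∫ x in a..b, f x) = (∫ x in a..m, f x) + ∫ x in m..b, f x := by
    rw [intervalIntegral.integral_add_adjacent_intervals]
    · rw [intervalIntegrable_iff_integrableOn_Icc_of_le ham.le]
      exact hint.mono_set hs1
    · rw [intervalIntegrable_iff_integrableOn_Icc_of_le hmb.le]
      exact hint.mono_set hs2
  have hkey : (∫ x in a..b, f x) ≤ (b - a) / 4 * (f a + 2 * f m + f b) := by
    rw [hsplit]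
    have : m - a = (b - a) / 2 := by rw [hm]; ring
    have : b - m = (b - a) / 2 := by rw [hm]; ring
    calc (∫ x in a..m, f x) + ∫ x in m..b, f x
        ≤ (m - a) * (f a + f m) / 2 + (b - m) * (f m + f b) / 2 := add_le_add t1 t2
      _ = (b - a) / 4 * (f a + 2 * f m + f b) := by rw [hm]; ring
  have h2 : (1 / (b - a)) * (∫ x in a..b, f x) ≤ (f a + 2 * f m + f b) / 4 := by
    calc (1 / (b - a)) * (∫ x in a..b, f x)
        ≤ (1 / (b - a)) * ((b - a) / 4 * (f a + 2 * f m + f b)) :=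
          mul_le_mul_of_nonneg_left hkey (by positivity)
      _ = (f a + 2 * f m + f b) / 4 := by field_simp
  have hI : IntervalIntegrable f volume a b := by
    rw [intervalIntegrable_iff_integrableOn_Icc_of_le hab.le]; exact hint
  have hsub : (∫ x in a..b, (f x - f m)) = (∫ x in a..b, f x) - (b - a) * f m := by
    rw [intervalIntegral.integral_sub hI (intervalIntegrable_const)]
    simp [intervalIntegral.integral_const, smul_eq_mul]
  have e : (1 / (b - a)) * ((∫ x in a..b, f x) - (b - a) * f m)
      = (1 / (b - a)) * (∫ x in a..b, f x) - f m := by field_simp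
  rw [show f ((a + b) / 2) = f m from rfl, hsub, e]
  linarith
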